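/- arXiv:0906.4596 — 7 statements merged into one kernel-verified Lean document; each statement's English description precedes it below -/
import Mathlib

section
/- Let D_s and D_u be pseudometrics on ℝ², let λ > 1, and let F : ℝ² → ℝ² be a homeomorphism such that D_s(F⁻¹(ξ),F⁻¹(η)) = λ·D_s(ξ,η) and D_u(F(ξ),F(η)) = λ·D_u(ξ,η) for all ξ,η ∈ ℝ². Assume D = D_s + D_u is a metric on ℝ² inducing the Euclidean topology which is proper, i.e. for some (hence every) x₀, D(x₀,x) → ∞ as ‖x‖ → ∞. Let H : ℝ² → ℝ² be a homeomorphism, set f = H⁻¹ ∘ F ∘ H, and define L(p,q) = D(H(p),H(q)). Then L is a metric on ℝ² inducing the Euclidean topology, its second difference Δ²L(p,q) = L(f²(p),f²(q)) − 2·L(f(p),f(q)) + L(p,q) is strictly positive for p ≠ q, and L satisfies condition HP with respect to f: for every compact set C ⊆ ℝ² and every ε > 0 there exists R > 0 such that for all p with ‖p‖ > R and all q, r ∈ C, |ΔL(p,q) − ΔL(p,r)| < ε·Δ²L(p,q), where ΔL(p,q) = L(f(p),f(q)) − L(p,q). -/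
/-- A pseudometric on the plane: nonnegative, symmetric, vanishing on the
diagonal, and satisfying the triangle inequality. -/
def IsPseudometric (p : ℝ × ℝ → ℝ × ℝ → ℝ) : Prop :=
  (∀ x y, 0 ≤ p x y) ∧ (∀ x y, p x y = p y x) ∧ (∀ x, p x x = 0) ∧
  (∀ x y z, p x z ≤ p x y + p y z)

/-- If `f = H⁻¹ ∘ F ∘ H` is conjugated to the lift `F` and
`L(p,q) = D(H(p),H(q))`, then `L` is a metric inducing the Euclidean topology,
its second difference is strictly positive off the diagonal, and `L` satisfies
condition HP with respect to `f`. -/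
theorem conjugated_lift_satisfies_HP
    (Ds Du : ℝ × ℝ → ℝ × ℝ → ℝ) (l : ℝ) (hl : 1 < l)
    (F : ℝ × ℝ ≃ₜ ℝ × ℝ)
    (hDs : IsPseudometric Ds) (hDu : IsPseudometric Du)
    (hs : ∀ ξ η : ℝ × ℝ, Ds (F.symm ξ) (F.symm η) = l * Ds ξ η)
    (hu : ∀ ξ η : ℝ × ℝ, Du (F ξ) (F η) = l * Du ξ η)
    (D : ℝ × ℝ → ℝ × ℝ → ℝ) (hD : ∀ x y, D x y = Ds x y + Du x y)
    -- `D` is a metric inducing the Euclidean topology: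
    (hDpos : ∀ x y, D x y = 0 ↔ x = y)
    (hDtop₁ : ∀ x : ℝ × ℝ, ∀ ε > 0, ∃ δ > 0, ∀ y, dist x y < δ → D x y < ε)
    (hDtop₂ : ∀ x : ℝ × ℝ, ∀ ε > 0, ∃ δ > 0, ∀ y, D x y < δ → dist x y < ε)
    -- `D` is proper:
    (hDproper : ∀ x₀ : ℝ × ℝ, ∀ M : ℝ, ∃ R : ℝ, ∀ x : ℝ × ℝ, R < ‖x‖ → M < D x₀ x)
    (H : ℝ × ℝ ≃ₜ ℝ × ℝ)
    (f : ℝ × ℝ → ℝ × ℝ) (hf : ∀ z, f z = H.symm (F (H z)))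
    (L : ℝ × ℝ → ℝ × ℝ → ℝ) (hL : ∀ p q, L p q = D (H p) (H q)) :
    -- `L` is a metric on ℝ²:
    ((∀ p q, 0 ≤ L p q) ∧ (∀ p q, L p q = L q p) ∧ (∀ p q, L p q = 0 ↔ p = q) ∧
      (∀ p q r, L p r ≤ L p q + L q r)) ∧
    -- `L` induces the Euclidean topology:
    ((∀ p : ℝ × ℝ, ∀ ε > 0, ∃ δ > 0, ∀ q, dist p q < δ → L p q < ε) ∧
      (∀ p : ℝ × ℝ, ∀ ε > 0, ∃ δ > 0, ∀ q, L p q < δ → dist p q < ε)) ∧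
    -- the second difference of `L` is strictly positive off the diagonal:
    (∀ p q : ℝ × ℝ, p ≠ q →
      0 < L (f (f p)) (f (f q)) - 2 * L (f p) (f q) + L p q) ∧
    -- condition HP for `L` with respect to `f`:
    (∀ C : Set (ℝ × ℝ), IsCompact C → ∀ ε > 0, ∃ R > 0, ∀ p : ℝ × ℝ, R < ‖p‖ →
      ∀ q ∈ C, ∀ r ∈ C,
        |(L (f p) (f q) - L p q) - (L (f p) (f r) - L p r)| <
          ε * (L (f (f p)) (f (f q)) - 2 * L (f p) (f q) + L p q)) := by
  obtain ⟨hsnn, hssym, hszero, hstri⟩ := hDs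
  obtain ⟨hunn, husym, huzero, hutri⟩ := hDu
  have l0 : (0:ℝ) < l := by linarith
  have lne : l ≠ 0 := ne_of_gt l0
  have hHf : ∀ p, H (f p) = F (H p) := fun p => by rw [hf]; exact H.apply_symm_apply _
  have hsF : ∀ ξ η, Ds (F ξ) (F η) = Ds ξ η / l := by
    intro ξ η
    have h := hs (F ξ) (F η)
    rw [F.symm_apply_apply, F.symm_apply_apply] at h
    rw [h]; field_simp
  have keyL : ∀ p q, L p q = Ds (H p) (H q) + Du (H p) (H q) := fun p q => by rw [hL, hD]
  have key1 : ∀ p q, L (f p) (f q) = Ds (H p) (H q) / l + l * Du (H p) (H q) := by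
    intro p q; simp only [hL, hHf, hD, hsF, hu]
  have key2 : ∀ p q,
      L (f (f p)) (f (f q)) = Ds (H p) (H q) / l / l + l * (l * Du (H p) (H q)) := by
    intro p q; simp only [hL, hHf, hD, hsF, hu]
  have Lnn : ∀ p q, 0 ≤ L p q := fun p q => by
    rw [keyL]; exact add_nonneg (hsnn _ _) (hunn _ _)
  have Lsym : ∀ p q, L p q = L q p := fun p q => by
    rw [keyL, keyL, hssym, husym]
  have Ltri : ∀ p q r, L p r ≤ L p q + L q r := by
    intro p q r
    rw [keyL, keyL, keyL]
    have h1 := hstri (H p) (H q) (H r)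
    have h2 := hutri (H p) (H q) (H r)
    linarith
  have Lzero : ∀ p q, L p q = 0 ↔ p = q := by
    intro p q
    rw [hL, hDpos]
    exact ⟨fun h => H.injective h, fun h => by rw [h]⟩
  have htop1 : ∀ p : ℝ × ℝ, ∀ ε > 0, ∃ δ > 0, ∀ q, dist p q < δ → L p q < ε := by
    intro p ε hε
    obtain ⟨δ₁, hδ₁, h1⟩ := hDtop₁ (H p) ε hε
    obtain ⟨δ, hδ, h2⟩ := Metric.continuousAt_iff.mp (H.continuous.continuousAt (x := p)) δ₁ hδ₁
    refine ⟨δ, hδ, fun q hq => ?_⟩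
    rw [hL]
    have := h2 (show dist q p < δ by rwa [dist_comm])
    exact h1 _ (by rwa [dist_comm])
  have htop2 : ∀ p : ℝ × ℝ, ∀ ε > 0, ∃ δ > 0, ∀ q, L p q < δ → dist p q < ε := by
    intro p ε hε
    obtain ⟨δ₁, hδ₁, h2⟩ :=
      Metric.continuousAt_iff.mp (H.symm.continuous.continuousAt (x := H p)) ε hε
    obtain ⟨δ, hδ, h1⟩ := hDtop₂ (H p) δ₁ hδ₁
    refine ⟨δ, hδ, fun q hq => ?_⟩
    rw [hL] at hq
    have h3 : dist (H q) (H p) < δ₁ := by rw [dist_comm]; exact h1 _ hq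
    have := h2 h3
    rw [H.symm_apply_apply, H.symm_apply_apply] at this
    rwa [dist_comm]
  have hΔ2 : ∀ p q : ℝ × ℝ, p ≠ q →
      0 < L (f (f p)) (f (f q)) - 2 * L (f p) (f q) + L p q := by
    intro p q hpq
    have ha := hsnn (H p) (H q)
    have hb := hunn (H p) (H q)
    have hLpos : 0 < L p q :=
      lt_of_le_of_ne (Lnn p q) (fun h => hpq ((Lzero p q).mp h.symm))
    rw [keyL] at hLpos
    rw [key2, key1, keyL]
    have h1l : 0 < 1 - 1/l := by
      have : 1/l < 1 := (div_lt_one l0).mpr hl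
      linarith
    have hid : Ds (H p) (H q) / l / l + l * (l * Du (H p) (H q))
        - 2 * (Ds (H p) (H q) / l + l * Du (H p) (H q))
        + (Ds (H p) (H q) + Du (H p) (H q))
        = Ds (H p) (H q) * (1 - 1/l)^2 + Du (H p) (H q) * (l - 1)^2 := by
      field_simp
      ring
    rw [hid]
    have hp1 : 0 < (1 - 1/l)^2 := pow_pos h1l 2
    have hp2 : 0 < (l - 1)^2 := pow_pos (by linarith) 2
    rcases lt_or_ge 0 (Ds (H p) (H q)) with haa | haa
    · nlinarith [mul_pos haa hp1, mul_nonneg hb hp2.le]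
    · have ha0 : Ds (H p) (H q) = 0 := le_antisymm haa ha
      have hbb : 0 < Du (H p) (H q) := by linarith
      nlinarith [mul_pos hbb hp2]
  refine ⟨⟨Lnn, Lsym, Lzero, Ltri⟩, ⟨htop1, htop2⟩, hΔ2, ?_⟩
  intro C hC ε hε
  have gcont : Continuous (fun q => L 0 q) := by
    rw [Metric.continuous_iff]
    intro q ε' hε'
    obtain ⟨δ, hδ, hδ'⟩ := htop1 q ε' hε'
    refine ⟨δ, hδ, fun y hy => ?_⟩
    have h3 : L q y < ε' := hδ' y (by rwa [dist_comm] at hy)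
    have h1 := Ltri 0 q y
    have h2 := Ltri 0 y q
    have h4 := Lsym y q
    rw [Real.dist_eq, abs_lt]
    constructor <;> linarith
  obtain ⟨M, hMnn, hMC⟩ : ∃ M : ℝ, 0 ≤ M ∧ ∀ q ∈ C, L 0 q ≤ M := by
    obtain ⟨M₀, hM₀⟩ := (hC.image gcont).bddAbove
    exact ⟨max M₀ 0, le_max_right _ _, fun q hq =>
      le_trans (hM₀ ⟨q, hq, rfl⟩) (le_max_left _ _)⟩
  have h1l : 0 < 1 - 1/l := by
    have : 1/l < 1 := (div_lt_one l0).mpr hl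
    linarith
  have hcc : 0 < (1 - 1/l)^2 := pow_pos h1l 2
  have hεcc : 0 < ε * (1 - 1/l)^2 := mul_pos hε hcc
  obtain ⟨T, hTval⟩ : ∃ T : ℝ, ε * (1 - 1/l)^2 * T = 2*(l-1)*M + ε*(1 - 1/l)^2 :=
    ⟨(2*(l-1)*M + ε*(1 - 1/l)^2) / (ε*(1 - 1/l)^2), by
      rw [mul_comm, div_mul_cancel₀ _ (ne_of_gt hεcc)]⟩
  obtain ⟨R₀, hR₀⟩ := hDproper (H 0) (T + M)
  have hK : IsCompact (H.symm '' Metric.closedBall 0 R₀) :=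
    (isCompact_closedBall _ _).image H.symm.continuous
  obtain ⟨R₁, hR₁⟩ := hK.isBounded.subset_closedBall 0
  refine ⟨max R₁ 1, lt_of_lt_of_le zero_lt_one (le_max_right _ _), ?_⟩
  intro p hp q hq r hr
  have hHp : R₀ < ‖H p‖ := by
    by_contra hcon
    push_neg at hcon
    have hmem : p ∈ H.symm '' Metric.closedBall 0 R₀ :=
      ⟨H p, mem_closedBall_zero_iff.mpr hcon, H.symm_apply_apply p⟩
    have := mem_closedBall_zero_iff.mp (hR₁ hmem)
    have := le_max_left R₁ 1
    linarith
  have hL0p : T + M < L 0 p := by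
    rw [hL]
    exact hR₀ _ hHp
  have hLpq : T < L p q := by
    have h1 := Ltri 0 q p
    have h2 := Lsym q p
    have h3 := hMC q hq
    linarith
  have key_lhs : (L (f p) (f q) - L p q) - (L (f p) (f r) - L p r)
      = (1/l - 1) * (Ds (H p) (H q) - Ds (H p) (H r))
        + (l - 1) * (Du (H p) (H q) - Du (H p) (H r)) := by
    rw [key1, key1, keyL, keyL]
    ring
  have key_rhs : L (f (f p)) (f (f q)) - 2 * L (f p) (f q) + L p q
      = Ds (H p) (H q) * (1 - 1/l)^2 + Du (H p) (H q) * (l - 1)^2 := by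
    rw [key2, key1, keyL]
    field_simp
    ring
  have habs_s : |Ds (H p) (H q) - Ds (H p) (H r)| ≤ Ds (H q) (H r) := by
    rw [abs_sub_le_iff]
    constructor
    · have h1 := hstri (H p) (H r) (H q)
      have h2 := hssym (H r) (H q)
      linarith
    · have h1 := hstri (H p) (H q) (H r)
      linarith
  have habs_u : |Du (H p) (H q) - Du (H p) (H r)| ≤ Du (H q) (H r) := by
    rw [abs_sub_le_iff]
    constructor
    · have h1 := hutri (H p) (H r) (H q)
      have h2 := husym (H r) (H q)
      linarith
    · have h1 := hutri (H p) (H q) (H r)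
      linarith
  have hLqr : Ds (H q) (H r) + Du (H q) (H r) ≤ 2*M := by
    rw [← keyL]
    have h1 := Ltri q 0 r
    have h2 := Lsym q 0
    have h3 := hMC q hq
    have h4 := hMC r hr
    linarith
  have h1l' : 1 - 1/l ≤ l - 1 := by
    have he : 1 - 1/l = (l-1)/l := by field_simp
    rw [he]
    exact div_le_self (by linarith) (by linarith)
  rw [key_lhs, key_rhs]
  have hchain : |(1/l - 1) * (Ds (H p) (H q) - Ds (H p) (H r))
      + (l - 1) * (Du (H p) (H q) - Du (H p) (H r))| ≤ (l - 1) * (2*M) := by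
    have e1 : |1/l - 1| = 1 - 1/l := by
      rw [abs_of_neg (by linarith)]; ring
    have e2 : |l - 1| = l - 1 := abs_of_pos (by linarith)
    calc |(1/l - 1) * (Ds (H p) (H q) - Ds (H p) (H r))
        + (l - 1) * (Du (H p) (H q) - Du (H p) (H r))|
        ≤ |(1/l - 1) * (Ds (H p) (H q) - Ds (H p) (H r))|
          + |(l - 1) * (Du (H p) (H q) - Du (H p) (H r))| := abs_add_le _ _
      _ = (1 - 1/l) * |Ds (H p) (H q) - Ds (H p) (H r)|
          + (l - 1) * |Du (H p) (H q) - Du (H p) (H r)| := by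
          rw [abs_mul, abs_mul, e1, e2]
      _ ≤ (1 - 1/l) * Ds (H q) (H r) + (l - 1) * Du (H q) (H r) :=
          add_le_add (mul_le_mul_of_nonneg_left habs_s h1l.le)
            (mul_le_mul_of_nonneg_left habs_u (by linarith))
      _ ≤ (l - 1) * Ds (H q) (H r) + (l - 1) * Du (H q) (H r) :=
          add_le_add (mul_le_mul_of_nonneg_right h1l' (hsnn _ _)) le_rfl
      _ = (l - 1) * (Ds (H q) (H r) + Du (H q) (H r)) := by ring
      _ ≤ (l - 1) * (2*M) := mul_le_mul_of_nonneg_left hLqr (by linarith)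
  have hab : T < Ds (H p) (H q) + Du (H p) (H q) := by
    rw [← keyL]; exact hLpq
  have hccle : (1 - 1/l)^2 ≤ (l - 1)^2 := pow_le_pow_left₀ h1l.le h1l' 2
  have hfin : (l - 1) * (2*M)
      < ε * (Ds (H p) (H q) * (1 - 1/l)^2 + Du (H p) (H q) * (l - 1)^2) := by
    nlinarith [mul_pos hεcc (sub_pos.mpr hab),
      mul_nonneg (mul_nonneg hε.le (hunn (H p) (H q))) (sub_nonneg.mpr hccle),
      hTval, hεcc, mul_nonneg (hsnn (H p) (H q)) hcc.le]
  exact lt_of_le_of_lt hchain hfin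
end

section
/- Let f : ℝ² → ℝ² be a homeomorphism and let U : ℝ² × ℝ² → ℝ be continuous with U(x,y) ≥ 0 for all x,y, U(x,y) = 0 if and only if x = y, and second difference W(x,y) = U(f²(x),f²(y)) − 2·U(f(x),f(y)) + U(x,y) strictly positive whenever x ≠ y. Then f is U-expansive: for any two distinct points x, y ∈ ℝ² and any k > 0 there exists n ∈ ℤ such that U(fⁿ(x), fⁿ(y)) > k. -/
/-- A homeomorphism of the plane admitting a continuous positive
function `U` (vanishing exactly on the diagonal) whose second difference along
the dynamics is strictly positive off the diagonal is `U`-expansive. -/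
theorem U_expansive_of_positive_second_difference
    (f : Equiv.Perm (ℝ × ℝ)) (hf : Continuous f) (hf' : Continuous f.symm)
    (U : ℝ × ℝ → ℝ × ℝ → ℝ)
    (hUcont : Continuous (fun z : (ℝ × ℝ) × (ℝ × ℝ) => U z.1 z.2))
    (hUnonneg : ∀ x y, 0 ≤ U x y)
    (hUzero : ∀ x y, U x y = 0 ↔ x = y)
    (hW : ∀ x y : ℝ × ℝ, x ≠ y →
      0 < U (f (f x)) (f (f y)) - 2 * U (f x) (f y) + U x y) :
    ∀ x y : ℝ × ℝ, x ≠ y → ∀ k > (0:ℝ),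
      ∃ n : ℤ, k < U ((f ^ n) x) ((f ^ n) y) := by
  intro x y hxy k hk
  set a : ℤ → ℝ := fun n => U ((f ^ n) x) ((f ^ n) y) with ha
  have hne : ∀ n : ℤ, (f ^ n) x ≠ (f ^ n) y := fun n h => hxy ((f ^ n).injective h)
  have hmul : ∀ (n : ℤ) (z : ℝ × ℝ), (f ^ (n + 1)) z = f ((f ^ n) z) := by
    intro n z
    rw [add_comm, zpow_add, zpow_one, Equiv.Perm.mul_apply]
  have key : ∀ n : ℤ, 0 < a (n + 2) - 2 * a (n + 1) + a n := by
    intro n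
    have h := hW ((f ^ n) x) ((f ^ n) y) (hne n)
    have e1 : ∀ z : ℝ × ℝ, (f ^ (n + 2)) z = f (f ((f ^ n) z)) := by
      intro z; rw [show n + 2 = (n + 1) + 1 by ring, hmul, hmul]
    have e2 : ∀ z : ℝ × ℝ, (f ^ (n + 1)) z = f ((f ^ n) z) := hmul n
    simp only [ha, e1, e2]
    exact h
  set b : ℤ → ℝ := fun n => a (n + 1) - a n with hbdef
  have hb : StrictMono b := by
    apply strictMono_int_of_lt_succ
    intro n
    have := key n
    simp only [hbdef]
    have : 0 < a (n + 1 + 1) - 2 * a (n + 1) + a n := by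
      rw [show n + 1 + 1 = n + 2 by ring]; exact key n
    linarith
  have fwd : ∀ N : ℕ, a 0 + N * b 0 ≤ a N := by
    intro N
    induction N with
    | zero => simp
    | succ N ih =>
      have hbN : b 0 ≤ b N := hb.monotone (by exact_mod_cast Nat.zero_le N)
      have : a ((N : ℤ) + 1) = a N + b N := by simp [hbdef]
      push_cast
      rw [this]
      push_cast at ih
      linarith
  have bwd : ∀ N : ℕ, a 0 + N * (-b (-1)) ≤ a (-N) := by
    intro N
    induction N with
    | zero => simp
    | succ N ih =>
      have hle : (-(N : ℤ) - 1) ≤ -1 := by omega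
      have hbN : b (-(N : ℤ) - 1) ≤ b (-1) := hb.monotone hle
      have hrec : a (-(N : ℤ) - 1) = a (-N) - b (-(N : ℤ) - 1) := by
        simp only [hbdef]
        rw [show -(N : ℤ) - 1 + 1 = -N by ring]
        ring
      have : a (-((N : ℕ) + 1 : ℕ) : ℤ) = a (-(N : ℤ) - 1) := by
        congr 1; push_cast; ring
      rw [this, hrec]
      push_cast at ih ⊢
      linarith
  by_cases hb0 : 0 < b 0
  · obtain ⟨N, hN⟩ := exists_nat_gt ((k - a 0) / b 0)
    refine ⟨N, ?_⟩
    have h1 : (k - a 0) < N * b 0 := by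
      have := (div_lt_iff₀ hb0).mp hN
      linarith
    have := fwd N
    linarith
  · push_neg at hb0
    have hc : 0 < -b (-1) := by
      have : b (-1) < b 0 := hb (by norm_num)
      linarith
    obtain ⟨N, hN⟩ := exists_nat_gt ((k - a 0) / (-b (-1)))
    refine ⟨-N, ?_⟩
    have h1 : (k - a 0) < N * (-b (-1)) := by
      have := (div_lt_iff₀ hc).mp hN
      linarith
    have := bwd N
    linarith
end

section
/- Let f : ℝ² → ℝ² be a homeomorphism admitting a Lyapunov metric function U satisfying the both-signs condition. Then f has no stable and no unstable points; more precisely, for every x ∈ ℝ² and every k > 0 there exists a point y with U(x,y) ≤ k such that U(fⁿ(x),fⁿ(y)) → ∞ as n → +∞, and there exists a point z with U(x,z) ≤ k such that U(fⁿ(x),fⁿ(z)) → ∞ as n → −∞. -/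
/-- First difference of `U` along the dynamics of `f`:
`V(x,y) = U(f(x),f(y)) − U(x,y)`. -/
def Vd (f : Equiv.Perm (ℝ × ℝ)) (U : ℝ × ℝ → ℝ × ℝ → ℝ) (x y : ℝ × ℝ) : ℝ :=
  U (f x) (f y) - U x y

/-- Second difference of `U` along the dynamics of `f`:
`W(x,y) = U(f²(x),f²(y)) − 2·U(f(x),f(y)) + U(x,y)`. -/
def Wd (f : Equiv.Perm (ℝ × ℝ)) (U : ℝ × ℝ → ℝ × ℝ → ℝ) (x y : ℝ × ℝ) : ℝ :=
  U (f (f x)) (f (f y)) - 2 * U (f x) (f y) + U x y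

/-- `U` is a Lyapunov metric function for `f`: a continuous metric on the plane
inducing the same topology as the Euclidean one, whose second difference along
`f` is strictly positive off the diagonal. -/
def IsLyapunovMetric (f : Equiv.Perm (ℝ × ℝ)) (U : ℝ × ℝ → ℝ × ℝ → ℝ) : Prop :=
  Continuous (fun z : (ℝ × ℝ) × (ℝ × ℝ) => U z.1 z.2) ∧
  (∀ x y, 0 ≤ U x y) ∧ (∀ x y, U x y = U y x) ∧
  (∀ x y, U x y = 0 ↔ x = y) ∧
  (∀ x y z, U x z ≤ U x y + U y z) ∧
  (∀ x : ℝ × ℝ, ∀ ε > (0:ℝ), ∃ δ > (0:ℝ), ∀ y, dist x y < δ → U x y < ε) ∧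
  (∀ x : ℝ × ℝ, ∀ ε > (0:ℝ), ∃ δ > (0:ℝ), ∀ y, U x y < δ → dist x y < ε) ∧
  (∀ x y : ℝ × ℝ, x ≠ y → 0 < Wd f U x y)

/-- `B_k(x)`: the connected component containing `x` of `{w : U(x,w) ≤ k}`. -/
def Bk (U : ℝ × ℝ → ℝ × ℝ → ℝ) (k : ℝ) (x : ℝ × ℝ) : Set (ℝ × ℝ) :=
  connectedComponentIn {w : ℝ × ℝ | U x w ≤ k} x

/-- The both-signs condition: on the boundary of every `B_k(x)` the first
difference takes both a positive and a negative value. -/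
def BothSigns (f : Equiv.Perm (ℝ × ℝ)) (U : ℝ × ℝ → ℝ × ℝ → ℝ) : Prop :=
  ∀ x : ℝ × ℝ, ∀ k > (0:ℝ),
    (∃ y ∈ frontier (Bk U k x), 0 < Vd f U x y) ∧
    (∃ z ∈ frontier (Bk U k x), Vd f U x z < 0)

/-- `x` is a stable point for `(f,U)`. -/
def IsStablePoint (f : Equiv.Perm (ℝ × ℝ)) (U : ℝ × ℝ → ℝ × ℝ → ℝ)
    (x : ℝ × ℝ) : Prop :=
  ∀ k' > (0:ℝ), ∃ k > (0:ℝ), ∀ y ∈ Bk U k x,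
    ∀ n : ℤ, 0 ≤ n → U ((f ^ n) x) ((f ^ n) y) < k'

/-- `x` is an unstable point for `(f,U)`. -/
def IsUnstablePoint (f : Equiv.Perm (ℝ × ℝ)) (U : ℝ × ℝ → ℝ × ℝ → ℝ)
    (x : ℝ × ℝ) : Prop :=
  ∀ k' > (0:ℝ), ∃ k > (0:ℝ), ∀ y ∈ Bk U k x,
    ∀ n : ℤ, n ≤ 0 → U ((f ^ n) x) ((f ^ n) y) < k'

open Filter

private lemma zpow_succ_apply' (f : Equiv.Perm (ℝ × ℝ)) (n : ℤ) (x : ℝ × ℝ) :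
    (f ^ (n + 1)) x = f ((f ^ n) x) := by
  rw [add_comm, zpow_add, zpow_one, Equiv.Perm.mul_apply]

/-- A closed set's connected component in it is closed. -/
private lemma isClosed_connectedComponentIn' {F : Set (ℝ × ℝ)} (hF : IsClosed F)
    (x : ℝ × ℝ) : IsClosed (connectedComponentIn F x) := by
  by_cases hx : x ∈ F
  · rw [connectedComponentIn_eq_image hx]
    exact hF.isClosedEmbedding_subtypeVal.isClosedMap _ isClosed_connectedComponent
  · rw [connectedComponentIn_eq_empty hx]
    exact isClosed_empty

private lemma key_tendsto (f : Equiv.Perm (ℝ × ℝ)) (U : ℝ × ℝ → ℝ × ℝ → ℝ)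
    (hU : IsLyapunovMetric f U) {x y : ℝ × ℝ} (hxy : x ≠ y) :
    (0 < Vd f U x y →
      Tendsto (fun n : ℤ => U ((f ^ n) x) ((f ^ n) y)) atTop atTop) ∧
    (Vd f U x y < 0 →
      Tendsto (fun n : ℤ => U ((f ^ n) x) ((f ^ n) y)) atBot atTop) := by
  set a : ℤ → ℝ := fun n => U ((f ^ n) x) ((f ^ n) y) with ha
  set d : ℤ → ℝ := fun n => a (n + 1) - a n with hd
  have hd0 : d 0 = Vd f U x y := by
    simp only [hd, ha, Vd, zero_add, zpow_one, zpow_zero, Equiv.Perm.one_apply]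
  have hmono : StrictMono d := by
    apply strictMono_int_of_lt_succ
    intro n
    have hne : (f ^ n) x ≠ (f ^ n) y := fun h => hxy ((f ^ n).injective h)
    have hw := hU.2.2.2.2.2.2.2 _ _ hne
    simp only [Wd] at hw
    have e1 : f ((f ^ n) x) = (f ^ (n + 1)) x := (zpow_succ_apply' f n x).symm
    have e2 : f ((f ^ n) y) = (f ^ (n + 1)) y := (zpow_succ_apply' f n y).symm
    rw [e1, e2, ← zpow_succ_apply' f (n+1) x, ← zpow_succ_apply' f (n+1) y] at hw
    have hw' : 0 < a (n + 1 + 1) - 2 * a (n + 1) + a n := hw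
    simp only [hd]
    linarith
  constructor
  · intro hV
    have hV' : 0 < d 0 := hd0 ▸ hV
    have hlin : ∀ m : ℕ, a 0 + (m : ℝ) * d 0 ≤ a (m : ℤ) := by
      intro m
      induction m with
      | zero => simp
      | succ m ih =>
        have h1 : d 0 ≤ d (m : ℤ) := hmono.monotone (by exact_mod_cast Int.natCast_nonneg m)
        have h2 : a ((m : ℤ) + 1) = a (m : ℤ) + d (m : ℤ) := by simp [hd]
        have h3 : ((m + 1 : ℕ) : ℤ) = (m : ℤ) + 1 := by push_cast; ring
        rw [h3, h2]
        push_cast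
        linarith
    have hbase : Tendsto (fun n : ℤ => a 0 + (n : ℝ) * d 0) atTop atTop :=
      tendsto_atTop_add_const_left _ _ (tendsto_intCast_atTop_atTop.atTop_mul_const hV')
    refine tendsto_atTop_mono' _ ?_ hbase
    filter_upwards [eventually_ge_atTop (0 : ℤ)] with n hn
    obtain ⟨m, rfl⟩ := Int.eq_ofNat_of_zero_le hn
    simpa using hlin m
  · intro hV
    have hV' : d 0 < 0 := hd0 ▸ hV
    have hlin : ∀ m : ℕ, a 0 + (m : ℝ) * (-(d 0)) ≤ a (-(m : ℤ)) := by
      intro m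
      induction m with
      | zero => simp
      | succ m ih =>
        have hle : (-(m : ℤ) - 1) ≤ 0 := by omega
        have h1 : d (-(m : ℤ) - 1) ≤ d 0 := hmono.monotone hle
        have h2 : a (-(m : ℤ) - 1 + 1) = a (-(m : ℤ) - 1) + d (-(m : ℤ) - 1) := by simp [hd]
        have h3 : (-(m : ℤ) - 1 + 1) = -(m : ℤ) := by ring
        have h4 : (-((m + 1 : ℕ) : ℤ)) = -(m : ℤ) - 1 := by push_cast; ring
        rw [h3] at h2
        rw [h4]
        push_cast
        linarith
    have hbase : Tendsto (fun n : ℤ => a 0 + (n : ℝ) * (-(d 0))) atTop atTop :=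
      tendsto_atTop_add_const_left _ _
        (tendsto_intCast_atTop_atTop.atTop_mul_const (by linarith))
    have h1 : Tendsto (fun n : ℤ => a (-n)) atTop atTop := by
      refine tendsto_atTop_mono' _ ?_ hbase
      filter_upwards [eventually_ge_atTop (0 : ℤ)] with n hn
      obtain ⟨m, rfl⟩ := Int.eq_ofNat_of_zero_le hn
      simpa using hlin m
    have := h1.comp (Filter.tendsto_neg_atBot_atTop (G := ℤ))
    simpa [Function.comp_def] using this

/-- under the both-signs condition there are no stable and no
unstable points; more precisely, arbitrarily `U`-close to any point there are
points whose forward (resp. backward) orbit separates from that of `x`. -/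
theorem no_stable_or_unstable_points
    (f : Equiv.Perm (ℝ × ℝ)) (hf : Continuous f) (hf' : Continuous f.symm)
    (U : ℝ × ℝ → ℝ × ℝ → ℝ)
    (hU : IsLyapunovMetric f U) (hBS : BothSigns f U) :
    (∀ x : ℝ × ℝ, ¬ IsStablePoint f U x ∧ ¬ IsUnstablePoint f U x) ∧
    ∀ x : ℝ × ℝ, ∀ k > (0:ℝ),
      (∃ y : ℝ × ℝ, U x y ≤ k ∧
        Filter.Tendsto (fun n : ℤ => U ((f ^ n) x) ((f ^ n) y))
          Filter.atTop Filter.atTop) ∧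
      (∃ z : ℝ × ℝ, U x z ≤ k ∧
        Filter.Tendsto (fun n : ℤ => U ((f ^ n) x) ((f ^ n) z))
          Filter.atBot Filter.atTop) := by
  have hclosed : ∀ (x : ℝ × ℝ) (k : ℝ), IsClosed (Bk U k x) := by
    intro x k
    have hc : Continuous fun w => U x w :=
      hU.1.comp (Continuous.prodMk_right x)
    exact isClosed_connectedComponentIn' (isClosed_le hc continuous_const) x
  have hne : ∀ x y : ℝ × ℝ, Vd f U x y ≠ 0 → x ≠ y := by
    intro x y h hxy
    subst hxy
    apply h
    simp [Vd, (hU.2.2.2.1 x x).2 rfl, (hU.2.2.2.1 (f x) (f x)).2 rfl]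
  constructor
  · intro x
    constructor
    · intro hs
      obtain ⟨k, hk, hb⟩ := hs 1 one_pos
      obtain ⟨⟨y, hyF, hyV⟩, -⟩ := hBS x k hk
      have hxy : x ≠ y := hne x y (ne_of_gt hyV)
      have ht := (key_tendsto f U hU hxy).1 hyV
      have hyB : y ∈ Bk U k x := (hclosed x k).frontier_subset hyF
      obtain ⟨n, hn1, hn0⟩ := ((ht.eventually_ge_atTop 1).and (eventually_ge_atTop 0)).exists
      exact absurd (hb y hyB n hn0) (not_lt.2 hn1)
    · intro hs
      obtain ⟨k, hk, hb⟩ := hs 1 one_pos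
      obtain ⟨-, ⟨z, hzF, hzV⟩⟩ := hBS x k hk
      have hxz : x ≠ z := hne x z (ne_of_lt hzV)
      have ht := (key_tendsto f U hU hxz).2 hzV
      have hzB : z ∈ Bk U k x := (hclosed x k).frontier_subset hzF
      obtain ⟨n, hn1, hn0⟩ := ((ht.eventually_ge_atTop 1).and (eventually_le_atBot 0)).exists
      exact absurd (hb z hzB n hn0) (not_lt.2 hn1)
  · intro x k hk
    obtain ⟨⟨y, hyF, hyV⟩, ⟨z, hzF, hzV⟩⟩ := hBS x k hk
    have hxy : x ≠ y := hne x y (ne_of_gt hyV)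
    have hxz : x ≠ z := hne x z (ne_of_lt hzV)
    have hyk : U x y ≤ k :=
      connectedComponentIn_subset {w : ℝ × ℝ | U x w ≤ k} x ((hclosed x k).frontier_subset hyF)
    have hzk : U x z ≤ k :=
      connectedComponentIn_subset {w : ℝ × ℝ | U x w ≤ k} x ((hclosed x k).frontier_subset hzF)
    exact ⟨⟨y, hyk, (key_tendsto f U hU hxy).1 hyV⟩,
           ⟨z, hzk, (key_tendsto f U hU hxz).2 hzV⟩⟩
end

section
/- Let f : ℝ² → ℝ² be a homeomorphism admitting a Lyapunov metric function U satisfying the both-signs condition. Fix x ∈ ℝ² and k > 0, and let A be a bounded open subset of ℝ² with x ∈ A ⊆ B_k(x), where B_k(x) is the connected component containing x of {w : U(x,w) ≤ k}. Then there exists a compact connected set C with x ∈ C ⊆ closure(A) and C ∩ ∂A ≠ ∅ such that U(fⁿ(x),fⁿ(y)) ≤ k for every y ∈ C and every integer n ≥ 0. -/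
open Set

/-! ### Auxiliary topological lemmas -/

section TopAux

variable {α : Type*} [TopologicalSpace α]

/-- A preconnected set meeting both `t` and its complement meets the frontier of `t`. -/
lemma aux_inter_frontier {s t : Set α} (hs : IsPreconnected s)
    (h1 : (s ∩ t).Nonempty) (h2 : (s \ t).Nonempty) : (s ∩ frontier t).Nonempty := by
  by_contra h
  rw [not_nonempty_iff_eq_empty] at h
  have hnf : ∀ z ∈ s, z ∉ frontier t := fun z hz hzf =>
    (eq_empty_iff_forall_notMem.mp h z) ⟨hz, hzf⟩
  have hcov : s ⊆ interior t ∪ interior tᶜ := by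
    intro z hz
    by_cases hzc : z ∈ closure t
    · left
      by_contra hzi
      exact hnf z hz ⟨hzc, hzi⟩
    · right
      rw [interior_compl]
      exact hzc
  obtain ⟨p, hps, hpt⟩ := h1
  have hpu : p ∈ interior t := by
    by_contra hpi
    exact hnf p hps ⟨subset_closure hpt, hpi⟩
  obtain ⟨q, hqs, hqt⟩ := h2
  have hqv : q ∈ interior tᶜ := by
    rw [interior_compl]
    intro hqc
    exact hnf q hqs ⟨hqc, fun hqi => hqt (interior_subset hqi)⟩
  obtain ⟨z, _, hz1, hz2⟩ := hs (interior t) (interior tᶜ) isOpen_interior isOpen_interior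
    hcov ⟨p, hps, hpu⟩ ⟨q, hqs, hqv⟩
  rw [interior_compl] at hz2
  exact hz2 (subset_closure (interior_subset hz1))

lemma aux_closed_CCIn {F : Set α} (hF : IsClosed F) (x : α) :
    IsClosed (connectedComponentIn F x) := by
  by_cases hx : x ∈ F
  · rw [connectedComponentIn_eq_image hx]
    exact hF.isClosedEmbedding_subtypeVal.isClosedMap _ isClosed_connectedComponent
  · rw [connectedComponentIn_eq_empty hx]
    exact isClosed_empty

lemma aux_compact_CCIn [T2Space α] {K : Set α} (hK : IsCompact K) (x : α) :
    IsCompact (connectedComponentIn K x) := by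
  by_cases hx : x ∈ K
  · rw [connectedComponentIn_eq_image hx]
    haveI : CompactSpace K := isCompact_iff_compactSpace.mp hK
    exact isClosed_connectedComponent.isCompact.image continuous_subtype_val
  · rw [connectedComponentIn_eq_empty hx]
    exact isCompact_empty

/-- Frontier points of a component of a sublevel set `{g ≤ k}` lie on the level `g = k`,
in a locally connected space. -/
lemma aux_frontier_level [LocallyConnectedSpace α] {g : α → ℝ} (hg : Continuous g) {k : ℝ}
    {x : α} (hx : g x ≤ k) {w : α}
    (hw : w ∈ frontier (connectedComponentIn {z | g z ≤ k} x)) : g w = k := by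
  have hBclosed : IsClosed (connectedComponentIn {z | g z ≤ k} x) :=
    aux_closed_CCIn (isClosed_le hg continuous_const) x
  have hwB : w ∈ connectedComponentIn {z | g z ≤ k} x := by
    have := frontier_subset_closure hw
    rwa [hBclosed.closure_eq] at this
  have hle : g w ≤ k := by
    have hmem : w ∈ {z | g z ≤ k} := connectedComponentIn_subset _ _ hwB
    exact hmem
  rcases eq_or_lt_of_le hle with h | h
  · exact h
  exfalso
  have hopen : IsOpen {z | g z < k} := isOpen_lt hg continuous_const
  obtain ⟨V, hVsub, hVopen, hwV, hVconn⟩ :=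
    locallyConnectedSpace_iff_subsets_isOpen_isConnected.mp inferInstance w _
      (hopen.mem_nhds h)
  obtain ⟨p, hpV, hpB⟩ := mem_closure_iff.mp (frontier_subset_closure hw) V hVopen hwV
  have hunion : IsPreconnected (V ∪ connectedComponentIn {z | g z ≤ k} x) :=
    IsPreconnected.union p hpV hpB hVconn.isPreconnected isPreconnected_connectedComponentIn
  have hsub : V ∪ connectedComponentIn {z | g z ≤ k} x ⊆ {z | g z ≤ k} :=
    union_subset (fun z hz => show g z ≤ k from (hVsub hz).le) (connectedComponentIn_subset _ _)
  have hxB : x ∈ connectedComponentIn {z | g z ≤ k} x := mem_connectedComponentIn hx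
  have hVB : V ∪ connectedComponentIn {z | g z ≤ k} x ⊆ connectedComponentIn {z | g z ≤ k} x :=
    hunion.subset_connectedComponentIn (Or.inr hxB) hsub
  have : w ∈ interior (connectedComponentIn {z | g z ≤ k} x) :=
    mem_interior.mpr ⟨V, fun z hz => hVB (Or.inl hz), hVopen, hwV⟩
  exact hw.2 this

/-- The intersection of a decreasing sequence of compact preconnected sets is preconnected. -/
lemma aux_iInter_preconnected [T2Space α] {K : ℕ → Set α}
    (hcomp : ∀ n, IsCompact (K n)) (hconn : ∀ n, IsPreconnected (K n))
    (hanti : ∀ n m, n ≤ m → K m ⊆ K n) : IsPreconnected (⋂ n, K n) := by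
  intro u v hu hv hcov ⟨p, hp, hpu⟩ ⟨q, hq, hqv⟩
  by_contra hne
  rw [not_nonempty_iff_eq_empty] at hne
  have hKinfclosed : IsClosed (⋂ n, K n) := isClosed_iInter fun n => (hcomp n).isClosed
  set P := (⋂ n, K n) \ v with hP
  set Q := (⋂ n, K n) \ u with hQ
  have hPcomp : IsCompact P :=
    (hcomp 0).of_isClosed_subset (hKinfclosed.sdiff hv) (diff_subset.trans (iInter_subset K 0))
  have hQcomp : IsCompact Q :=
    (hcomp 0).of_isClosed_subset (hKinfclosed.sdiff hu) (diff_subset.trans (iInter_subset K 0))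
  have hdisj : Disjoint P Q := by
    rw [Set.disjoint_left]
    rintro z ⟨hz1, hz2⟩ ⟨_, hz3⟩
    rcases hcov hz1 with h | h
    · exact hz3 h
    · exact hz2 h
  obtain ⟨Uo, Vo, hUo, hVo, hPU, hQV, hUV⟩ := SeparatedNhds.of_isCompact_isCompact hPcomp hQcomp hdisj
  have hPQ : (⋂ n, K n) ⊆ Uo ∪ Vo := by
    intro z hz
    by_cases hzv : z ∈ v
    · by_cases hzu : z ∈ u
      · exact absurd ⟨hz, hzu, hzv⟩ (eq_empty_iff_forall_notMem.mp hne z)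
      · exact Or.inr (hQV ⟨hz, hzu⟩)
    · exact Or.inl (hPU ⟨hz, hzv⟩)
  have hexist : ∃ n, K n ⊆ Uo ∪ Vo := by
    by_contra hno
    push_neg at hno
    have hne' : ∀ n, (K n \ (Uo ∪ Vo)).Nonempty := by
      intro n
      obtain ⟨z, hz1, hz2⟩ := not_subset.mp (hno n)
      exact ⟨z, hz1, hz2⟩
    obtain ⟨z, hz⟩ := IsCompact.nonempty_iInter_of_sequence_nonempty_isCompact_isClosed
      (fun n => K n \ (Uo ∪ Vo))
      (fun n => diff_subset_diff_left (hanti n (n+1) (Nat.le_succ n))) hne'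
      ((hcomp 0).diff (hUo.union hVo))
      (fun n => (hcomp n).isClosed.sdiff (hUo.union hVo))
    rw [mem_iInter] at hz
    have hz1 : z ∈ ⋂ n, K n := mem_iInter.mpr fun n => (hz n).1
    exact (hz 0).2 (hPQ hz1)
  obtain ⟨n, hn⟩ := hexist
  have hpP : p ∈ P := by
    refine ⟨hp, fun hpv => ?_⟩
    exact absurd ⟨hp, hpu, hpv⟩ (eq_empty_iff_forall_notMem.mp hne p)
  have hqQ : q ∈ Q := by
    refine ⟨hq, fun hqu => ?_⟩
    exact absurd ⟨hq, hqu, hqv⟩ (eq_empty_iff_forall_notMem.mp hne q)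
  obtain ⟨z, _, hz1, hz2⟩ := hconn n Uo Vo hUo hVo hn
    ⟨p, mem_iInter.mp hp n, hPU hpP⟩ ⟨q, mem_iInter.mp hq n, hQV hqQ⟩
  exact Set.disjoint_left.mp hUV hz1 hz2

end TopAux

/-! ### Auxiliary dynamical lemmas -/

lemma powCont (f : Equiv.Perm (ℝ × ℝ)) (hf : Continuous ⇑f) (j : ℕ) :
    Continuous ⇑(f ^ j) := by
  induction j with
  | zero => simpa [pow_zero] using continuous_id
  | succ m ih =>
    rw [pow_succ, Equiv.Perm.coe_mul]
    exact ih.comp hf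

lemma powApp' (f : Equiv.Perm (ℝ × ℝ)) (i j : ℕ) (h : j = i + 1) (z : ℝ × ℝ) :
    (f ^ j) z = f ((f ^ i) z) := by
  subst h
  rw [pow_succ']
  rfl

lemma powSymmCont (f : Equiv.Perm (ℝ × ℝ)) (hf' : Continuous ⇑f.symm) (j : ℕ) :
    Continuous ⇑(f ^ j).symm := by
  induction j with
  | zero => rw [pow_zero]; exact continuous_id
  | succ m ih =>
    have h : ⇑(f ^ (m+1)).symm = ⇑(f ^ m).symm ∘ ⇑f.symm := by
      funext z
      rw [Function.comp_apply, Equiv.symm_apply_eq, powApp' f m (m+1) rfl]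
      simp
    rw [h]
    exact ih.comp hf'

/-- The iterate of the homeomorphism as a homeomorphism. -/
def homeoPow (f : Equiv.Perm (ℝ × ℝ)) (hf : Continuous ⇑f) (hf' : Continuous ⇑f.symm)
    (j : ℕ) : (ℝ × ℝ) ≃ₜ (ℝ × ℝ) :=
  ⟨(f ^ j : Equiv.Perm (ℝ × ℝ)), powCont f hf j, powSymmCont f hf' j⟩

/-! ### The key step -/

/-- KEY STEP: for each `n`, the connected component of `x` in
`closure A ∩ {y | ∀ j ≤ n, U(fʲ x, fʲ y) ≤ k}` meets the frontier of `A`. -/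
lemma key_step (f : Equiv.Perm (ℝ × ℝ)) (hf : Continuous ⇑f) (hf' : Continuous ⇑f.symm)
    (U : ℝ × ℝ → ℝ × ℝ → ℝ)
    (hU : IsLyapunovMetric f U) (hBS : BothSigns f U)
    (x : ℝ × ℝ) (k : ℝ) (hk : 0 < k)
    (A : Set (ℝ × ℝ)) (hAopen : IsOpen A) (hAbdd : Bornology.IsBounded A)
    (hxA : x ∈ A) (hAB : A ⊆ Bk U k x) (n : ℕ) :
    (connectedComponentIn
        (closure A ∩ {y | ∀ j ≤ n, U ((f ^ j) x) ((f ^ j) y) ≤ k}) x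
      ∩ frontier A).Nonempty := by
  obtain ⟨hc, hnn, hsym, hzero, htri, h6, h7, hW⟩ := hU
  have hUc : ∀ p : ℝ × ℝ, Continuous fun w => U p w := fun p => hc.comp (Continuous.prodMk_right p)
  have hUjc : ∀ j : ℕ, Continuous fun y => U ((f ^ j) x) ((f ^ j) y) :=
    fun j => (hUc _).comp (powCont f hf j)
  have hzz : ∀ p : ℝ × ℝ, U p p = 0 := fun p => (hzero p p).mpr rfl
  -- strict convexity of j ↦ U (fʲ x) (fʲ y)
  have hconv : ∀ y : ℝ × ℝ, y ≠ x → ∀ m₀ m₁ m₂ : ℕ, m₁ = m₀ + 1 → m₂ = m₀ + 2 →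
      2 * U ((f ^ m₁) x) ((f ^ m₁) y) <
        U ((f ^ m₂) x) ((f ^ m₂) y) + U ((f ^ m₀) x) ((f ^ m₀) y) := by
    intro y hy m₀ m₁ m₂ h1 h2
    subst h1; subst h2
    have hne : (f ^ m₀) x ≠ (f ^ m₀) y := fun h => hy ((f ^ m₀).injective h).symm
    have hw := hW _ _ hne
    unfold Wd at hw
    have e1 : ∀ z : ℝ × ℝ, f ((f ^ m₀) z) = (f ^ (m₀ + 1)) z :=
      fun z => (powApp' f m₀ (m₀+1) rfl z).symm
    have e2 : ∀ z : ℝ × ℝ, f (f ((f ^ m₀) z)) = (f ^ (m₀ + 2)) z := by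
      intro z
      rw [powApp' f (m₀+1) (m₀+2) rfl, powApp' f m₀ (m₀+1) rfl]
    rw [e2 x, e2 y, e1 x, e1 y] at hw
    linarith
  by_contra hcon
  rw [not_nonempty_iff_eq_empty] at hcon
  set K := closure A ∩ {y | ∀ j ≤ n, U ((f ^ j) x) ((f ^ j) y) ≤ k} with hKdef
  have hG0 : closure A ⊆ {w | U x w ≤ k} :=
    closure_minimal (hAB.trans (connectedComponentIn_subset _ _))
      (isClosed_le (hUc x) continuous_const)
  have hxK : x ∈ K := by
    refine ⟨subset_closure hxA, fun j _ => ?_⟩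
    rw [hzz]
    exact hk.le
  have hKclosed : IsClosed K := by
    refine IsClosed.inter isClosed_closure ?_
    have heq : {y : ℝ × ℝ | ∀ j ≤ n, U ((f ^ j) x) ((f ^ j) y) ≤ k}
        = ⋂ j ∈ Set.Iic n, {y | U ((f ^ j) x) ((f ^ j) y) ≤ k} := by
      ext y
      simp [Set.mem_iInter]
    rw [heq]
    exact isClosed_biInter fun j _ => isClosed_le (hUjc j) continuous_const
  have hKcomp : IsCompact K :=
    Metric.isCompact_of_isClosed_isBounded hKclosed (hAbdd.closure.subset inter_subset_left)
  haveI : CompactSpace K := isCompact_iff_compactSpace.mp hKcomp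
  set x₀ : K := ⟨x, hxK⟩ with hx₀
  have hFclosed : IsClosed ((Subtype.val ⁻¹' frontier A : Set K)) :=
    isClosed_frontier.preimage continuous_subtype_val
  haveI : Nonempty {Z : Set K // IsClopen Z ∧ x₀ ∈ Z} := ⟨⟨univ, isClopen_univ, mem_univ _⟩⟩
  have hdisj : (Subtype.val ⁻¹' frontier A : Set K) ∩
      ⋂ Z : {Z : Set K // IsClopen Z ∧ x₀ ∈ Z}, (Z : Set K) = ∅ := by
    rw [← connectedComponent_eq_iInter_isClopen x₀]
    ext z
    simp only [mem_inter_iff, mem_preimage, mem_empty_iff_false, iff_false, not_and]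
    intro hz1 hz2
    have hmem : (z : ℝ × ℝ) ∈ connectedComponentIn K x ∩ frontier A := by
      rw [connectedComponentIn_eq_image hxK]
      exact ⟨mem_image_of_mem _ hz2, hz1⟩
    rw [hcon] at hmem
    exact hmem
  have hdir : Directed (fun s t : Set K => t ⊆ s)
      (fun Z : {Z : Set K // IsClopen Z ∧ x₀ ∈ Z} => (Z : Set K)) :=
    fun Z₁ Z₂ => ⟨⟨Z₁ ∩ Z₂, Z₁.2.1.inter Z₂.2.1, ⟨Z₁.2.2, Z₂.2.2⟩⟩,
      inter_subset_left, inter_subset_right⟩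
  obtain ⟨⟨Z, hZclopen, hx₀Z⟩, hZF⟩ := hFclosed.isCompact.elim_directed_family_closed
    (fun Z : {Z : Set K // IsClopen Z ∧ x₀ ∈ Z} => (Z : Set K))
    (fun W => W.2.1.isClosed) hdisj hdir
  set D : Set (ℝ × ℝ) := Subtype.val '' Z with hDdef
  have hDK : D ⊆ K := by
    rintro _ ⟨z, _, rfl⟩
    exact z.2
  have hxD : x ∈ D := ⟨x₀, hx₀Z, rfl⟩
  have hDcomp : IsCompact D := (hZclopen.isClosed.isCompact).image continuous_subtype_val
  have hDclosed : IsClosed D := hDcomp.isClosed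
  have hDfr : ∀ z ∈ D, z ∉ frontier A := by
    rintro _ ⟨w, hwZ, rfl⟩ hfr
    exact (eq_empty_iff_forall_notMem.mp hZF w) ⟨hfr, hwZ⟩
  have hDA : D ⊆ A := by
    intro z hz
    have hzc : (z : ℝ × ℝ) ∈ closure A := (hDK hz).1
    rw [closure_eq_self_union_frontier] at hzc
    rcases hzc with h | h
    · exact h
    · exact absurd h (hDfr z hz)
  obtain ⟨O, hOopen, hOeq⟩ := isOpen_induced_iff.mp hZclopen.isOpen
  have hDKO : D = K ∩ O := by
    rw [hDdef, ← hOeq, Subtype.image_preimage_coe]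
  -- every frontier point of D escapes at time n+1
  have hfrD : ∀ y ∈ frontier D, k < U ((f ^ (n+1)) x) ((f ^ (n+1)) y) := by
    intro y hyfr
    have hyD : y ∈ D := by
      have := frontier_subset_closure hyfr
      rwa [hDclosed.closure_eq] at this
    have hyK : y ∈ K := hDK hyD
    have hyA : y ∈ A := hDA hyD
    have hyO : y ∈ O := by
      rw [hDKO] at hyD
      exact hyD.2
    have hbnd : ∀ j ≤ n, U ((f ^ j) x) ((f ^ j) y) ≤ k := hyK.2
    have hex : ∃ j, 1 ≤ j ∧ j ≤ n ∧ U ((f ^ j) x) ((f ^ j) y) = k := by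
      by_contra hnex
      push_neg at hnex
      have hlt : ∀ j, 1 ≤ j → j ≤ n → U ((f ^ j) x) ((f ^ j) y) < k :=
        fun j hj1 hj2 => lt_of_le_of_ne (hbnd j hj2) (hnex j hj1 hj2)
      set N := O ∩ A ∩ ⋂ j ∈ Finset.Icc 1 n, {z : ℝ × ℝ | U ((f ^ j) x) ((f ^ j) z) < k} with hN
      have hNopen : IsOpen N :=
        (hOopen.inter hAopen).inter
          (isOpen_biInter_finset fun j _ => isOpen_lt (hUjc j) continuous_const)
      have hyN : y ∈ N := by
        refine ⟨⟨hyO, hyA⟩, ?_⟩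
        simp only [mem_iInter, mem_setOf_eq, Finset.mem_Icc]
        rintro j ⟨hj1, hj2⟩
        exact hlt j hj1 hj2
      have hND : N ⊆ D := by
        rintro z ⟨⟨hzO, hzA⟩, hz3⟩
        simp only [mem_iInter, mem_setOf_eq, Finset.mem_Icc] at hz3
        have hzK : z ∈ K := by
          refine ⟨subset_closure hzA, fun j hj => ?_⟩
          rcases Nat.eq_zero_or_pos j with rfl | hj1
          · have h0 : U x z ≤ k := hG0 (subset_closure hzA)
            simpa [pow_zero] using h0
          · exact (hz3 j ⟨hj1, hj⟩).le
        rw [hDKO]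
        exact ⟨hzK, hzO⟩
      exact hyfr.2 (mem_interior.mpr ⟨N, hND, hNopen, hyN⟩)
    obtain ⟨j, hj1, hjn, hjeq⟩ := hex
    have hyx : y ≠ x := by
      rintro rfl
      rw [hzz] at hjeq
      exact hk.ne' hjeq.symm
    obtain ⟨m, rfl⟩ : ∃ m, j = m + 1 := ⟨j - 1, (Nat.succ_pred_eq_of_pos hj1).symm⟩
    rcases lt_or_eq_of_le hjn with hlt | heq
    · exfalso
      have hcm := hconv y hyx m (m+1) (m+2) rfl rfl
      have h2 : U ((f ^ (m+2)) x) ((f ^ (m+2)) y) ≤ k := hbnd _ (by omega)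
      have h3 : U ((f ^ m) x) ((f ^ m) y) ≤ k := hbnd _ (by omega)
      rw [hjeq] at hcm
      linarith
    · have hcm := hconv y hyx m (m+1) (n+1) rfl (by omega)
      have h3 : U ((f ^ m) x) ((f ^ m) y) ≤ k := hbnd _ (by omega)
      rw [hjeq] at hcm
      linarith
  -- transport by f^(n+1)
  set H := homeoPow f hf hf' (n+1) with hH
  have hHco : ⇑H = ⇑(f ^ (n+1)) := rfl
  set x' := (f ^ (n+1)) x with hx'
  set E := ⇑H '' D with hE
  have hfrE : ∀ z ∈ frontier E, k < U x' z := by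
    intro z hz
    rw [hE, ← H.image_frontier] at hz
    obtain ⟨y, hyfr, rfl⟩ := hz
    exact hfrD y hyfr
  have hx'E : x' ∈ E := ⟨x, hxD, rfl⟩
  set B' := Bk U k x' with hB'
  have hB'pre : IsPreconnected B' := isPreconnected_connectedComponentIn
  have hB'sub : B' ⊆ {w | U x' w ≤ k} := connectedComponentIn_subset _ _
  have hx'B' : x' ∈ B' := by
    refine mem_connectedComponentIn ?_
    show U x' x' ≤ k
    rw [hzz]
    exact hk.le
  have hB'E : B' ⊆ E := by
    by_contra hnot
    obtain ⟨w, hwB', hwE⟩ := not_subset.mp hnot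
    obtain ⟨z, hzB', hzfr⟩ := aux_inter_frontier hB'pre ⟨x', hx'B', hx'E⟩ ⟨w, hwB', hwE⟩
    exact absurd (hB'sub hzB') (not_le.mpr (hfrE z hzfr))
  obtain ⟨-, ⟨w, hwfr, hVw⟩⟩ := hBS x' k hk
  have hwfr' : w ∈ frontier (connectedComponentIn {z : ℝ × ℝ | U x' z ≤ k} x') := hwfr
  have hB'closed : IsClosed (connectedComponentIn {z : ℝ × ℝ | U x' z ≤ k} x') :=
    aux_closed_CCIn (isClosed_le (hUc x') continuous_const) x'
  have hwB' : w ∈ B' := by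
    have hcl := frontier_subset_closure hwfr'
    rwa [hB'closed.closure_eq] at hcl
  have hwk : U x' w = k := by
    refine aux_frontier_level (hUc x') ?_ hwfr'
    rw [hzz]
    exact hk.le
  obtain ⟨y, hyD, hyw⟩ := hB'E hwB'
  have hyx : y ≠ x := by
    rintro rfl
    rw [← hyw] at hwk
    rw [show (⇑H y : ℝ × ℝ) = x' from rfl] at hwk
    rw [hzz] at hwk
    exact hk.ne' hwk.symm
  have h1 : U ((f ^ (n+1)) x) ((f ^ (n+1)) y) = k := by
    rw [← hyw] at hwk
    exact hwk
  have hVw' : U ((f ^ (n+2)) x) ((f ^ (n+2)) y) < k := by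
    have hv := hVw
    unfold Vd at hv
    rw [hwk] at hv
    have e1 : f x' = (f ^ (n+2)) x := by
      rw [hx']
      exact (powApp' f (n+1) (n+2) rfl x).symm
    have e2 : f w = (f ^ (n+2)) y := by
      rw [← hyw, hHco]
      exact (powApp' f (n+1) (n+2) rfl y).symm
    rw [e1, e2] at hv
    linarith
  have h0 : U ((f ^ n) x) ((f ^ n) y) ≤ k := (hDK hyD).2 n le_rfl
  have hcm := hconv y hyx n (n+1) (n+2) rfl rfl
  rw [h1] at hcm
  linarith

/-- inside any bounded open neighbourhood `A ⊆ B_k(x)` of `x`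
there is a compact connected set joining `x` to the boundary of `A` whose
points stay `U`-within `k` of the orbit of `x` for all forward times. -/
theorem stable_continuum_reaching_boundary
    (f : Equiv.Perm (ℝ × ℝ)) (hf : Continuous f) (hf' : Continuous f.symm)
    (U : ℝ × ℝ → ℝ × ℝ → ℝ)
    (hU : IsLyapunovMetric f U) (hBS : BothSigns f U)
    (x : ℝ × ℝ) (k : ℝ) (hk : 0 < k)
    (A : Set (ℝ × ℝ)) (hAopen : IsOpen A) (hAbdd : Bornology.IsBounded A)
    (hxA : x ∈ A) (hAB : A ⊆ Bk U k x) :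
    ∃ C : Set (ℝ × ℝ), IsCompact C ∧ IsConnected C ∧ x ∈ C ∧
      C ⊆ closure A ∧ (C ∩ frontier A).Nonempty ∧
      ∀ y ∈ C, ∀ n : ℤ, 0 ≤ n → U ((f ^ n) x) ((f ^ n) y) ≤ k := by
  have hUc : ∀ p : ℝ × ℝ, Continuous fun w => U p w := fun p => hU.1.comp (Continuous.prodMk_right p)
  have hzz : ∀ p : ℝ × ℝ, U p p = 0 := fun p => (hU.2.2.2.1 p p).mpr rfl
  set S : ℕ → Set (ℝ × ℝ) :=
    fun n => closure A ∩ {y | ∀ j ≤ n, U ((f ^ j) x) ((f ^ j) y) ≤ k} with hS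
  have hxS : ∀ n, x ∈ S n := by
    intro n
    refine ⟨subset_closure hxA, fun j _ => ?_⟩
    rw [hzz]
    exact hk.le
  have hSclosed : ∀ n, IsClosed (S n) := by
    intro n
    refine IsClosed.inter isClosed_closure ?_
    have heq : {y : ℝ × ℝ | ∀ j ≤ n, U ((f ^ j) x) ((f ^ j) y) ≤ k}
        = ⋂ j ∈ Set.Iic n, {y | U ((f ^ j) x) ((f ^ j) y) ≤ k} := by
      ext y
      simp [Set.mem_iInter]
    rw [heq]
    exact isClosed_biInter fun j _ =>
      isClosed_le ((hUc _).comp (powCont f hf j)) continuous_const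
  have hScomp : ∀ n, IsCompact (S n) := fun n =>
    Metric.isCompact_of_isClosed_isBounded (hSclosed n) (hAbdd.closure.subset inter_subset_left)
  set Cc : ℕ → Set (ℝ × ℝ) := fun n => connectedComponentIn (S n) x with hCc
  have hkey : ∀ n, (Cc n ∩ frontier A).Nonempty :=
    fun n => key_step f hf hf' U hU hBS x k hk A hAopen hAbdd hxA hAB n
  have hCcomp : ∀ n, IsCompact (Cc n) := fun n => aux_compact_CCIn (hScomp n) x
  have hCpre : ∀ n, IsPreconnected (Cc n) := fun n => isPreconnected_connectedComponentIn
  have hCanti : ∀ n m, n ≤ m → Cc m ⊆ Cc n := by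
    intro n m hnm
    apply connectedComponentIn_mono
    rintro y ⟨hy1, hy2⟩
    exact ⟨hy1, fun j hj => hy2 j (hj.trans hnm)⟩
  have hxC : ∀ n, x ∈ Cc n := fun n => mem_connectedComponentIn (hxS n)
  refine ⟨⋂ n, Cc n, ?_, ?_, ?_, ?_, ?_, ?_⟩
  · exact (hCcomp 0).of_isClosed_subset (isClosed_iInter fun n => (hCcomp n).isClosed)
      (iInter_subset _ 0)
  · exact ⟨⟨x, mem_iInter.mpr hxC⟩, aux_iInter_preconnected hCcomp hCpre hCanti⟩
  · exact mem_iInter.mpr hxC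
  · exact (iInter_subset _ 0).trans
      ((connectedComponentIn_subset _ _).trans inter_subset_left)
  · have hmain : (⋂ n, Cc n ∩ frontier A).Nonempty :=
      IsCompact.nonempty_iInter_of_sequence_nonempty_isCompact_isClosed _
        (fun n => inter_subset_inter_left _ (hCanti n (n+1) (Nat.le_succ n)))
        hkey ((hCcomp 0).inter_right isClosed_frontier)
        (fun n => ((hCcomp n).inter_right isClosed_frontier).isClosed)
    rwa [← iInter_inter] at hmain
  · intro y hy nz hnz
    have hmem : y ∈ S nz.toNat :=
      (connectedComponentIn_subset _ _) ((mem_iInter.mp hy) nz.toNat)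
    have hle := hmem.2 nz.toNat le_rfl
    have heq : (f ^ nz) = (f ^ nz.toNat : Equiv.Perm (ℝ × ℝ)) := by
      rw [← zpow_natCast, Int.toNat_of_nonneg hnz]
    rw [heq]
    exact hle
end

section
/- Let f : ℝ² → ℝ² be a homeomorphism admitting a Lyapunov metric function U. If x, y ∈ ℝ² and there exists K > 0 such that U(fⁿ(x),fⁿ(y)) ≤ K for all n ∈ ℤ, then x = y. Consequently a stable curve and an unstable curve of f intersect each other at most once: for every K > 0, the intersection of the K-stable set and the K-unstable set of any point x equals {x}. -/
/-- The `K`-stable set of `x`. -/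
def Sk (f : Equiv.Perm (ℝ × ℝ)) (U : ℝ × ℝ → ℝ × ℝ → ℝ) (K : ℝ)
    (x : ℝ × ℝ) : Set (ℝ × ℝ) :=
  {y | ∀ n : ℤ, 0 ≤ n → U ((f ^ n) x) ((f ^ n) y) ≤ K}

/-- The `K`-unstable set of `x`. -/
def Uk (f : Equiv.Perm (ℝ × ℝ)) (U : ℝ × ℝ → ℝ × ℝ → ℝ) (K : ℝ)
    (x : ℝ × ℝ) : Set (ℝ × ℝ) :=
  {y | ∀ n : ℤ, n ≤ 0 → U ((f ^ n) x) ((f ^ n) y) ≤ K}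

/-- a full orbit bounded in the Lyapunov metric forces the two
points to coincide; hence stable and unstable sets meet at most once. -/
theorem bounded_full_orbit_implies_equal
    (f : Equiv.Perm (ℝ × ℝ)) (hf : Continuous f) (hf' : Continuous f.symm)
    (U : ℝ × ℝ → ℝ × ℝ → ℝ) (hU : IsLyapunovMetric f U) :
    (∀ x y : ℝ × ℝ,
      (∃ K > (0:ℝ), ∀ n : ℤ, U ((f ^ n) x) ((f ^ n) y) ≤ K) → x = y) ∧
    (∀ K > (0:ℝ), ∀ x : ℝ × ℝ, Sk f U K x ∩ Uk f U K x = {x}) := by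
  have hW := hU.2.2.2.2.2.2.2
  have hU0 := hU.2.2.2.1
  have key : ∀ x y : ℝ × ℝ,
      (∃ K > (0:ℝ), ∀ n : ℤ, U ((f ^ n) x) ((f ^ n) y) ≤ K) → x = y := by
    intro x y hK
    by_contra hxy
    obtain ⟨K, hKpos, hb⟩ := hK
    set a : ℤ → ℝ := fun n => U ((f ^ n) x) ((f ^ n) y) with ha
    set b : ℤ → ℝ := fun n => a (n + 1) - a n with hbdef
    have hne : ∀ n : ℤ, (f ^ n) x ≠ (f ^ n) y := by
      intro n h
      exact hxy ((f ^ n).injective h)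
    have hstep : ∀ (m : ℤ) (z : ℝ × ℝ), f ((f ^ m) z) = (f ^ (m + 1)) z := by
      intro m z
      rw [add_comm, zpow_one_add]
      rfl
    have hconv : ∀ n : ℤ, b n < b (n + 1) := by
      intro n
      have h := hW ((f ^ n) x) ((f ^ n) y) (hne n)
      unfold Wd at h
      rw [hstep n x, hstep n y, hstep (n+1) x, hstep (n+1) y] at h
      simp only [hbdef, ha]
      have : ((n:ℤ) + 1 + 1) = n + 2 := by ring
      rw [this] at h
      have h2 : (n:ℤ) + 1 + 1 = n + 2 := by ring
      rw [h2]
      linarith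
    have hmono : StrictMono b := strictMono_int_of_lt_succ hconv
    rcases le_or_gt 0 (b 0) with h0 | h0
    · -- forward growth
      have hb1 : 0 < b 1 := lt_of_le_of_lt h0 (hmono (by norm_num))
      have grow : ∀ N : ℕ, a 1 + N * b 1 ≤ a (1 + N) := by
        intro N
        induction N with
        | zero => simp
        | succ N ih =>
          have hbm : b 1 ≤ b (1 + N) := hmono.monotone (by omega)
          have : a (1 + N) + b (1 + N) = a (1 + (N + 1)) := by
            simp only [hbdef]
            push_cast
            ring_nf
          push_cast
          push_cast at ih
          nlinarith [this]
      obtain ⟨N, hN⟩ := exists_nat_gt ((K - a 1) / b 1)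
      have : (K - a 1) / b 1 * b 1 < N * b 1 := by
        exact (mul_lt_mul_iff_of_pos_right hb1).mpr hN
      rw [div_mul_cancel₀ _ (ne_of_gt hb1)] at this
      have := grow N
      have hbb := hb (1 + N)
      change a (1 + N) ≤ K at hbb
      linarith [grow N, hbb]
    · -- backward growth
      have grow : ∀ N : ℕ, a 0 + N * (-(b 0)) ≤ a (-N) := by
        intro N
        induction N with
        | zero => simp
        | succ N ih =>
          have hle : (-(N:ℤ) - 1 : ℤ) ≤ 0 := by omega
          have hbm : b (-(N:ℤ) - 1) ≤ b 0 := hmono.monotone hle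
          have hsum : a (-(N:ℤ) - 1) + b (-(N:ℤ) - 1) = a (-(N:ℤ)) := by
            simp only [hbdef]
            ring_nf
          have hcast : (-(((N:ℕ)+1 : ℕ)) : ℤ) = -(N:ℤ) - 1 := by push_cast; ring
          rw [hcast]
          push_cast
          nlinarith [hsum, ih]
      obtain ⟨N, hN⟩ := exists_nat_gt ((K - a 0) / (-(b 0)))
      have hpos : 0 < -(b 0) := by linarith
      have : (K - a 0) / (-(b 0)) * (-(b 0)) < N * (-(b 0)) :=
        (mul_lt_mul_iff_of_pos_right hpos).mpr hN
      rw [div_mul_cancel₀ _ (ne_of_gt hpos)] at this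
      have hbb := hb (-N)
      change a (-N) ≤ K at hbb
      linarith [grow N, hbb]
  refine ⟨key, ?_⟩
  intro K hKpos x
  ext y
  simp only [Set.mem_inter_iff, Set.mem_singleton_iff, Sk, Uk, Set.mem_setOf_eq]
  constructor
  · rintro ⟨hs, hu⟩
    refine (key x y ⟨K, hKpos, fun n => ?_⟩).symm
    rcases le_or_gt 0 n with h | h
    · exact hs n h
    · exact hu n h.le
  · rintro rfl
    constructor <;> intro n _ <;>
      · rw [(hU0 _ _).mpr rfl]
        exact hKpos.le
end

section
/- Let λ > 1, let L_λ(x,y) = (λ·x, λ⁻¹·y), let h : ℝ² → ℝ² be a homeomorphism, and set f = h⁻¹ ∘ L_λ ∘ h. Define D_s((x₁,y₁),(x₂,y₂)) = |y₁ − y₂|, D_u((x₁,y₁),(x₂,y₂)) = |x₁ − x₂|, D = D_s + D_u, and U(p,q) = D(h(p),h(q)). Then the following are equivalent: (i) for every k > 0 there exists k' > 0 such that U(p,q) < k implies d(p,q) < k' for all p,q ∈ ℝ², where d is the Euclidean distance; (ii) the conjugation preserves stable and unstable curves in the sense of the usual distance, i.e. for every k > 0 there exists k' > 0 such that for all p,q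 ∈ ℝ²: if h(p) and h(q) have the same first coordinate and their second coordinates differ by at most k, then d(fⁿ(p),fⁿ(q)) < k' for all n ≥ 0; and if h(p) and h(q) have the same second coordinate and their first coordinates differ by at most k, then d(fⁿ(p),fⁿ(q)) < k' for all n ≤ 0. -/
/-- The stable pseudometric of the linear model: `D_s(z,w) = |z₂ − w₂|`. -/
def linDs (z w : ℝ × ℝ) : ℝ := |z.2 - w.2|

/-- The unstable pseudometric of the linear model: `D_u(z,w) = |z₁ − w₁|`. -/
def linDu (z w : ℝ × ℝ) : ℝ := |z.1 - w.1|

/-- The Lyapunov metric of the linear model: `D = D_s + D_u`. -/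
def linD (z w : ℝ × ℝ) : ℝ := linDs z w + linDu z w

/-- for `f = h⁻¹ ∘ L_λ ∘ h` and `U(p,q) = D(h(p),h(q))`, the
uniform comparison of `U` with the Euclidean distance is equivalent to the
conjugation preserving stable and unstable curves in the usual-distance sense. -/
theorem U_comparable_iff_conjugation_preserves_curves
    (l : ℝ) (hl : 1 < l) (h : ℝ × ℝ ≃ₜ ℝ × ℝ)
    (f : Equiv.Perm (ℝ × ℝ))
    (hf : ∀ z : ℝ × ℝ, f z = h.symm (l * (h z).1, l⁻¹ * (h z).2))
    (U : ℝ × ℝ → ℝ × ℝ → ℝ) (hU : ∀ p q, U p q = linD (h p) (h q)) :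
    (∀ k > (0:ℝ), ∃ k' > (0:ℝ), ∀ p q : ℝ × ℝ, U p q < k → dist p q < k') ↔
    (∀ k > (0:ℝ), ∃ k' > (0:ℝ), ∀ p q : ℝ × ℝ,
      ((h p).1 = (h q).1 → |(h p).2 - (h q).2| ≤ k →
        ∀ n : ℤ, 0 ≤ n → dist ((f ^ n) p) ((f ^ n) q) < k') ∧
      ((h p).2 = (h q).2 → |(h p).1 - (h q).1| ≤ k →
        ∀ n : ℤ, n ≤ 0 → dist ((f ^ n) p) ((f ^ n) q) < k')) := by
  have hl0 : (0:ℝ) < l := lt_trans one_pos hl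
  have hlne : l ≠ 0 := ne_of_gt hl0
  have hfp : ∀ p, h (f p) = (l * (h p).1, l⁻¹ * (h p).2) := by
    intro p; rw [hf]; exact h.apply_symm_apply _
  have hfinv : ∀ p, h (f⁻¹ p) = (l⁻¹ * (h p).1, l * (h p).2) := by
    intro p
    have hz : f (h.symm (l⁻¹ * (h p).1, l * (h p).2)) = p := by
      rw [hf]
      have : h (h.symm (l⁻¹ * (h p).1, l * (h p).2))
          = (l⁻¹ * (h p).1, l * (h p).2) := h.apply_symm_apply _
      rw [this]
      simp only
      rw [mul_inv_cancel_left₀ hlne, inv_mul_cancel_left₀ hlne]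
      exact h.symm_apply_apply p
    have hinv : f⁻¹ (f (h.symm (l⁻¹ * (h p).1, l * (h p).2))) = h.symm (l⁻¹ * (h p).1, l * (h p).2) :=
      Equiv.symm_apply_apply f (h.symm (l⁻¹ * (h p).1, l * (h p).2))
    rw [hz] at hinv
    rw [hinv]; exact h.apply_symm_apply _
  have key : ∀ n : ℤ, ∀ p,
      h ((f ^ n) p) = (l ^ n * (h p).1, (l ^ n)⁻¹ * (h p).2) := by
    intro n
    induction n using Int.induction_on with
    | zero => intro p; simp
    | succ n ih =>
      intro p
      have hstep : (f ^ ((n:ℤ) + 1)) p = (f ^ (n:ℤ)) (f p) := by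
        rw [zpow_add_one]; rfl
      rw [hstep, ih, hfp]
      simp only
      rw [zpow_add_one₀ hlne]
      refine Prod.ext ?_ ?_ <;> simp <;> ring
    | pred n ih =>
      intro p
      have hstep : (f ^ (-(n:ℤ) - 1)) p = (f ^ (-(n:ℤ))) (f⁻¹ p) := by
        rw [zpow_sub_one]; rfl
      rw [hstep, ih, hfinv]
      simp only
      rw [zpow_sub_one₀ hlne]
      refine Prod.ext ?_ ?_ <;> simp <;> ring
  have Ukey : ∀ (n : ℤ) (p q : ℝ × ℝ), U ((f ^ n) p) ((f ^ n) q)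
      = (l ^ n)⁻¹ * |(h p).2 - (h q).2| + l ^ n * |(h p).1 - (h q).1| := by
    intro n p q
    have hlp : (0:ℝ) < l ^ n := zpow_pos hl0 n
    rw [hU, key, key]
    simp only [linD, linDs, linDu]
    rw [← mul_sub, ← mul_sub, abs_mul, abs_mul, abs_of_pos hlp,
      abs_of_pos (inv_pos.mpr hlp)]
  constructor
  · intro H k hk
    obtain ⟨k', hk', hK⟩ := H (k + 1) (by linarith)
    refine ⟨k', hk', fun p q => ⟨?_, ?_⟩⟩
    · intro h1 h2 n hn
      apply hK
      rw [Ukey]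
      have hlp : (1:ℝ) ≤ l ^ n := one_le_zpow₀ hl.le hn
      have : |(h p).1 - (h q).1| = 0 := by rw [h1]; simp
      rw [this, mul_zero, add_zero]
      have hinv : (l ^ n)⁻¹ ≤ 1 := by
        rw [inv_le_one_iff₀]; right; exact hlp
      have habs : (0:ℝ) ≤ |(h p).2 - (h q).2| := abs_nonneg _
      nlinarith
    · intro h1 h2 n hn
      apply hK
      rw [Ukey]
      have hlp : l ^ n ≤ 1 := zpow_le_one_of_nonpos₀ hl.le hn
      have hlp0 : (0:ℝ) < l ^ n := zpow_pos hl0 n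
      have : |(h p).2 - (h q).2| = 0 := by rw [h1]; simp
      rw [this, mul_zero, zero_add]
      have habs : (0:ℝ) ≤ |(h p).1 - (h q).1| := abs_nonneg _
      nlinarith
  · intro H k hk
    obtain ⟨k', hk', hK⟩ := H k hk
    refine ⟨2 * k', by linarith, fun p q hUlt => ?_⟩
    set r := h.symm ((h p).1, (h q).2) with hr
    have hr1 : (h r).1 = (h p).1 := by rw [hr, h.apply_symm_apply]
    have hr2 : (h r).2 = (h q).2 := by rw [hr, h.apply_symm_apply]
    rw [hU] at hUlt
    simp only [linD, linDs, linDu] at hUlt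
    have hy : |(h p).2 - (h q).2| ≤ k := by
      have := abs_nonneg ((h p).1 - (h q).1); linarith
    have hx : |(h p).1 - (h q).1| ≤ k := by
      have := abs_nonneg ((h p).2 - (h q).2); linarith
    have h0 : ((f ^ (0:ℤ)) : Equiv.Perm (ℝ × ℝ)) = 1 := zpow_zero f
    have d1 : dist p r < k' := by
      have := (hK p r).1 (hr1.symm) (by rw [hr2]; exact hy) 0 le_rfl
      rwa [h0, Equiv.Perm.one_apply, Equiv.Perm.one_apply] at this
    have d2 : dist r q < k' := by
      have := (hK r q).2 hr2 (by rw [hr1]; exact hx) 0 le_rfl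
      rwa [h0, Equiv.Perm.one_apply, Equiv.Perm.one_apply] at this
    calc dist p q ≤ dist p r + dist r q := dist_triangle p r q
      _ < 2 * k' := by linarith
end

section
/- Let f : ℝ² → ℝ² be a homeomorphism admitting a Lyapunov metric function U with the additional property that for every δ > 0 there exists a(δ) > 0 such that W(x,y) > a(δ) for all x,y ∈ ℝ² with U(x,y) > δ. If x, y ∈ ℝ² are distinct points such that U(fⁿ(x),fⁿ(y)) ≤ U(x,y) for all integers n ≥ 1, then V(fⁿ(x),fⁿ(y)) < 0 for all n ≥ 1 and U(fⁿ(x),fⁿ(y)) → 0 as n → +∞. -/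
/-- if `W` is uniformly bounded below away from the diagonal and
the forward `U`-distances never exceed the initial one, then the first
differences are negative along the forward orbit and `U(fⁿ(x),fⁿ(y)) → 0`. -/
theorem forward_contraction_tends_to_zero
    (f : Equiv.Perm (ℝ × ℝ)) (hf : Continuous f) (hf' : Continuous f.symm)
    (U : ℝ × ℝ → ℝ × ℝ → ℝ) (hU : IsLyapunovMetric f U)
    (hWbelow : ∀ δ > (0:ℝ), ∃ a > (0:ℝ), ∀ x y : ℝ × ℝ, δ < U x y → a < Wd f U x y)
    (x y : ℝ × ℝ) (hxy : x ≠ y)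
    (hdecr : ∀ n : ℤ, 1 ≤ n → U ((f ^ n) x) ((f ^ n) y) ≤ U x y) :
    (∀ n : ℤ, 1 ≤ n → Vd f U ((f ^ n) x) ((f ^ n) y) < 0) ∧
    Filter.Tendsto (fun n : ℤ => U ((f ^ n) x) ((f ^ n) y))
      Filter.atTop (nhds 0) := by
  obtain ⟨hcont, hpos, hsymm, hzero, htri, h1, h2, hW⟩ := hU
  set u : ℤ → ℝ := fun n => U ((f ^ n) x) ((f ^ n) y) with hu
  have hne : ∀ n : ℤ, (f ^ n) x ≠ (f ^ n) y := fun n h => hxy ((f ^ n).injective h)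
  have hstep : ∀ (n : ℤ) (z : ℝ × ℝ), f ((f ^ n) z) = (f ^ (n + 1)) z := by
    intro n z
    rw [add_comm, zpow_add, zpow_one, Equiv.Perm.mul_apply]
  have hupos : ∀ n : ℤ, 0 < u n := fun n =>
    lt_of_le_of_ne (hpos _ _) (fun h => hne n ((hzero _ _).mp h.symm))
  have hu0 : u 0 = U x y := by simp [hu]
  set d : ℤ → ℝ := fun n => u (n + 1) - u n with hd
  have hWeq : ∀ n : ℤ, Wd f U ((f ^ n) x) ((f ^ n) y) = u (n + 2) - 2 * u (n + 1) + u n := by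
    intro n
    have e3 := hstep (n + 1) x; have e4 := hstep (n + 1) y
    have e12 : n + 1 + 1 = n + 2 := by ring
    rw [e12] at e3 e4
    simp only [Wd, hu, hstep n x, hstep n y, e3, e4]
  have hVeq : ∀ n : ℤ, Vd f U ((f ^ n) x) ((f ^ n) y) = d n := by
    intro n
    simp only [Vd, hu, hd, hstep n x, hstep n y]
  have hdlt : ∀ n : ℤ, d n < d (n + 1) := by
    intro n
    have := hW _ _ (hne n)
    rw [hWeq n] at this
    simp only [hd]
    have e : n + 1 + 1 = n + 2 := by ring
    rw [e]
    linarith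
  have hdmono : StrictMono d := strictMono_int_of_lt_succ hdlt
  have growth : ∀ (g : ℤ → ℝ) (c : ℝ) (N : ℤ),
      (∀ m : ℤ, N ≤ m → g m + c ≤ g (m + 1)) → ∀ k : ℕ, g N + k * c ≤ g (N + k) := by
    intro g c N hg k
    induction k with
    | zero => simp
    | succ k ih =>
      have hk : N ≤ N + (k : ℤ) := by omega
      have h1 := hg (N + (k : ℤ)) hk
      have e : N + ((k : ℕ) + 1 : ℕ) = N + (k : ℤ) + 1 := by push_cast; ring
      rw [e]
      push_cast
      nlinarith [ih]
  have hdneg : ∀ n : ℤ, 1 ≤ n → d n < 0 := by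
    intro n hn
    by_contra hcon
    push_neg at hcon
    set c := d (n + 1) with hc
    have hcpos : 0 < c := lt_of_le_of_lt hcon (hdlt n)
    have hg : ∀ m : ℤ, n + 1 ≤ m → u m + c ≤ u (m + 1) := by
      intro m hm
      have : c ≤ d m := hdmono.monotone hm
      simp only [hd] at this
      linarith
    obtain ⟨k, hk⟩ := exists_nat_gt ((u 0 - u (n + 1)) / c)
    have hk2 : u 0 - u (n + 1) < k * c := by
      rw [div_lt_iff₀ hcpos] at hk; linarith
    have := growth u c (n + 1) hg k
    have hle := hdecr (n + 1 + k) (by omega)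
    rw [← hu0] at hle
    have : u (n + 1 + (k : ℤ)) ≤ u 0 := hle
    have := growth u c (n + 1) hg k
    linarith
  have hanti : ∀ n : ℤ, 1 ≤ n → ∀ k : ℕ, u (n + k) ≤ u n := by
    intro n hn k
    induction k with
    | zero => simp
    | succ k ih =>
      have hneg := hdneg (n + (k : ℤ)) (by omega)
      simp only [hd] at hneg
      have e : n + ((k : ℕ) + 1 : ℕ) = n + (k : ℤ) + 1 := by push_cast; ring
      rw [e]
      linarith
  have hsmall : ∀ ε : ℝ, 0 < ε → ∃ n : ℤ, 1 ≤ n ∧ u n < ε := by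
    intro ε hε
    by_contra hcon
    push_neg at hcon
    obtain ⟨a, hapos, ha⟩ := hWbelow (ε / 2) (by linarith)
    have hg : ∀ m : ℤ, 1 ≤ m → d m + a ≤ d (m + 1) := by
      intro m hm
      have hum : ε / 2 < u m := lt_of_lt_of_le (by linarith) (hcon m hm)
      have := ha _ _ hum
      rw [hWeq m] at this
      simp only [hd]
      have e : m + 1 + 1 = m + 2 := by ring
      rw [e]
      linarith
    obtain ⟨k, hk⟩ := exists_nat_gt ((-d 1) / a)
    have hk2 : -d 1 < k * a := by rw [div_lt_iff₀ hapos] at hk; linarith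
    have := growth d a 1 hg k
    have := hdneg (1 + (k : ℤ)) (by omega)
    linarith
  constructor
  · intro n hn
    rw [hVeq n]
    exact hdneg n hn
  · rw [Metric.tendsto_atTop]
    intro ε hε
    obtain ⟨n₀, hn₀, hlt⟩ := hsmall ε hε
    refine ⟨n₀, fun m hm => ?_⟩
    have hk : n₀ + ((m - n₀).toNat : ℤ) = m := by omega
    have := hanti n₀ hn₀ (m - n₀).toNat
    rw [hk] at this
    rw [Real.dist_eq, sub_zero, abs_of_nonneg (hupos m).le]
    exact lt_of_le_of_lt this hlt
end
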